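/- Let S be a semigroup of operators on a Banach space X such that for every x₀ ∈ X and T > 0 there exist L, r > 0 with ‖S(t)y − S(t)z‖ ≤ L‖y−z‖ for all t ∈ [0,T] and y, z in the ball B(x₀,r), and suppose t ↦ S(t)x is continuous at 0 for each x. If x ∈ X satisfies sup_{0<h≤h₀} ‖(S(h)x − x)/h‖ < ∞ for some h₀ > 0, then the map t ↦ S(t)x is locally Lipschitz on [0,∞). -/
import Mathlib


/-- If a semigroup `S` on a Banach space is locally uniformly Lipschitz near each point and
strongly continuous at `0`, then for any `x` with bounded difference quotients at `0` the
orbit map `t ↦ S(t)x` is locally Lipschitz on `[0,∞)`. -/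
theorem stmt15 {X : Type*} [NormedAddCommGroup X] [NormedSpace ℝ X] [CompleteSpace X]
    (S : ℝ → X → X)
    (h0 : ∀ x, S 0 x = x)
    (hsg : ∀ s t : ℝ, 0 ≤ s → 0 ≤ t → ∀ x, S (s + t) x = S t (S s x))
    (hlip : ∀ (x₀ : X) (T : ℝ), 0 < T → ∃ L > (0 : ℝ), ∃ r > (0 : ℝ),
      ∀ t : ℝ, 0 ≤ t → t ≤ T → ∀ y z : X, ‖y - x₀‖ ≤ r → ‖z - x₀‖ ≤ r →
        ‖S t y - S t z‖ ≤ L * ‖y - z‖)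
    (hcont : ∀ x : X, Filter.Tendsto (fun t => S t x) (nhdsWithin 0 (Set.Ici 0)) (nhds x))
    (x : X)
    (hx : ∃ h₀ > (0 : ℝ), ∃ C : ℝ, ∀ h : ℝ, 0 < h → h ≤ h₀ → ‖S h x - x‖ ≤ C * h) :
    ∀ T : ℝ, 0 < T → ∃ L ≥ (0 : ℝ), ∀ s t : ℝ, s ∈ Set.Icc 0 T → t ∈ Set.Icc 0 T →
      ‖S t x - S s x‖ ≤ L * |t - s| := by
  obtain ⟨h₀, hh₀, C, hC⟩ := hx
  intro T hT
  obtain ⟨L, hL, r, hr, hLip⟩ := hlip x T hT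
  have hC0 : 0 ≤ C := by
    have h1 : (0:ℝ) < min h₀ 1 := lt_min hh₀ one_pos
    have := hC (min h₀ 1) h1 (min_le_left _ _)
    nlinarith [norm_nonneg (S (min h₀ 1) x - x)]
  set C' : ℝ := C + 1 with hC'def
  have hC'pos : (0:ℝ) < C' := by positivity
  set δ : ℝ := min h₀ (r / C') with hδdef
  have hδpos : 0 < δ := lt_min hh₀ (by positivity)
  set K : ℝ := L * C' with hKdef
  have hK0 : 0 ≤ K := by positivity
  refine ⟨K, hK0, ?_⟩
  have key : ∀ s t : ℝ, s ∈ Set.Icc 0 T → t ∈ Set.Icc 0 T → s ≤ t → t - s ≤ δ →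
      ‖S t x - S s x‖ ≤ K * (t - s) := by
    intro s t hs ht hst hd
    rcases eq_or_lt_of_le hst with rfl | hlt
    · simp
    · set h := t - s with hh
      have hhpos : 0 < h := sub_pos.mpr hlt
      have hh₀' : h ≤ h₀ := le_trans hd (min_le_left _ _)
      have hnorm : ‖S h x - x‖ ≤ C * h := hC h hhpos hh₀'
      have hnorm' : ‖S h x - x‖ ≤ C' * h := le_trans hnorm (by nlinarith)
      have hball : ‖S h x - x‖ ≤ r := by
        have hδr : h ≤ r / C' := le_trans hd (min_le_right _ _)
        have h2 : C' * h ≤ r := by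
          calc C' * h ≤ C' * (r / C') := by nlinarith
            _ = r := by field_simp
        linarith
      have hsem : S t x = S s (S h x) := by
        have e := hsg h s (le_of_lt hhpos) hs.1 x
        rw [← e]
        congr 1
        ring
      have hest := hLip s hs.1 hs.2 (S h x) x hball (by simp; linarith)
      rw [hsem]
      calc ‖S s (S h x) - S s x‖ ≤ L * ‖S h x - x‖ := hest
        _ ≤ L * (C' * h) := by nlinarith
        _ = K * (t - s) := by rw [hKdef]; ring
  have chain : ∀ n : ℕ, ∀ s t : ℝ, s ∈ Set.Icc 0 T → t ∈ Set.Icc 0 T → s ≤ t →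
      t - s ≤ n * δ → ‖S t x - S s x‖ ≤ K * (t - s) := by
    intro n
    induction n with
    | zero =>
      intro s t hs ht hst hd
      have hts : t = s := by
        simp only [Nat.cast_zero, zero_mul] at hd
        linarith
      subst hts
      simp
    | succ n ih =>
      intro s t hs ht hst hd
      set m : ℝ := min t (s + δ) with hm
      have hsm : s ≤ m := le_min hst (by linarith)
      have hmt : m ≤ t := min_le_left _ _
      have hmIcc : m ∈ Set.Icc 0 T := ⟨le_trans hs.1 hsm, le_trans hmt ht.2⟩
      have hms : m - s ≤ δ := by
        have : m ≤ s + δ := min_le_right _ _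
        linarith
      have htm : t - m ≤ n * δ := by
        rcases le_or_gt t (s + δ) with hc | hc
        · have : m = t := min_eq_left hc
          rw [this]
          simp
          positivity
        · have : m = s + δ := min_eq_right (le_of_lt hc)
          rw [this]
          push_cast at hd ⊢
          linarith
      have h1 := key s m hs hmIcc hsm hms
      have h2 := ih m t hmIcc ht hmt htm
      calc ‖S t x - S s x‖ ≤ ‖S t x - S m x‖ + ‖S m x - S s x‖ :=
            norm_sub_le_norm_sub_add_norm_sub _ _ _
        _ ≤ K * (t - m) + K * (m - s) := add_le_add h2 h1
        _ = K * (t - s) := by ring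
  intro s t hs ht
  obtain ⟨n, hn⟩ := exists_nat_ge (T / δ)
  have hTn : T ≤ n * δ := by
    rw [div_le_iff₀ hδpos] at hn
    linarith
  rcases le_total s t with hst | hst
  · have hd : t - s ≤ n * δ := by
      have : t - s ≤ T := by
        have := ht.2; have := hs.1; linarith
      linarith
    have := chain n s t hs ht hst hd
    rwa [abs_of_nonneg (by linarith)]
  · have hd : s - t ≤ n * δ := by
      have : s - t ≤ T := by
        have := hs.2; have := ht.1; linarith
      linarith
    have := chain n t s ht hs hst hd
    rw [norm_sub_rev, abs_of_nonpos (by linarith), neg_sub]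
    exact this
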